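/- Let W be a symmetric n×n real matrix with nonnegative entries, D the diagonal matrix with D_ii = d_i = Σ_j w_ij, L = D − W, and γ > 0. Let {1,…,n} be partitioned into a nonempty labeled set l and an unlabeled set u, and suppose ℓ ∈ ℝ^n satisfies (L_uu + γI) ℓ_u = W_ul ℓ_l. Then the confidence of every unlabeled vertex is bounded by the largest labeled confidence: for every i ∈ u, |ℓ_i| ≤ max_{j ∈ l} |ℓ_j|. In particular, if ℓ_j ∈ {−1, 1} for all j ∈ l, then |ℓ_i| ≤ 1 for all i. -/

import Mathlib

open Matrix BigOperators

/-- Maximum principle for the regularized harmonic solution: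
the confidence of every unlabeled vertex is bounded by the largest labeled
confidence, and if the labels are in `{−1, 1}` then `|ℓ_i| ≤ 1` for all `i`. -/
theorem regularized_harmonic_confidence_bound
    (n : ℕ) (W : Matrix (Fin n) (Fin n) ℝ)
    (hsym : W.IsSymm) (hnn : ∀ i j, 0 ≤ W i j)
    (γ : ℝ) (hγ : 0 < γ)
    (l : Finset (Fin n)) (hne : l.Nonempty)
    (L : Matrix (Fin n) (Fin n) ℝ)
    (hL : L = Matrix.diagonal (fun i => ∑ j, W i j) - W)
    (Luu : Matrix {i // i ∈ lᶜ} {i // i ∈ lᶜ} ℝ)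
    (hLuu : Luu = Matrix.of fun i j => L i.1 j.1)
    (Wul : Matrix {i // i ∈ lᶜ} {i // i ∈ l} ℝ)
    (hWul : Wul = Matrix.of fun i j => W i.1 j.1)
    (ℓ : Fin n → ℝ)
    (hharm : (Luu + γ • (1 : Matrix {i // i ∈ lᶜ} {i // i ∈ lᶜ} ℝ)).mulVec
        (fun i => ℓ i.1) = Wul.mulVec (fun j => ℓ j.1)) :
    (∀ i : Fin n, i ∉ l → |ℓ i| ≤ l.sup' hne fun j => |ℓ j|) ∧
    ((∀ j ∈ l, ℓ j = -1 ∨ ℓ j = 1) → ∀ i : Fin n, |ℓ i| ≤ 1) := by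
  -- the row equation at an unlabeled vertex
  have key : ∀ i : Fin n, i ∉ l →
      ((∑ j, W i j) + γ) * ℓ i = ∑ j, W i j * ℓ j := by
    intro i hi
    have hi' : i ∈ lᶜ := Finset.mem_compl.2 hi
    rw [add_mulVec, smul_mulVec, one_mulVec] at hharm
    have h := congrFun hharm ⟨i, hi'⟩
    simp only [Pi.add_apply, Pi.smul_apply, smul_eq_mul, mulVec, dotProduct,
      hLuu, hWul, of_apply] at h
    have hu : (∑ j : {x // x ∈ lᶜ}, L i j.1 * ℓ j.1)
        = ∑ j ∈ lᶜ, L i j * ℓ j :=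
      Finset.sum_coe_sort lᶜ (fun j => L i j * ℓ j)
    have hl2 : (∑ j : {x // x ∈ l}, W i j.1 * ℓ j.1)
        = ∑ j ∈ l, W i j * ℓ j :=
      Finset.sum_coe_sort l (fun j => W i j * ℓ j)
    rw [hu, hl2] at h
    have hDiag : ∑ j ∈ lᶜ, L i j * ℓ j
        = (∑ j, W i j) * ℓ i - ∑ j ∈ lᶜ, W i j * ℓ j := by
      subst hL
      simp only [Matrix.sub_apply, diagonal_apply, sub_mul]
      rw [Finset.sum_sub_distrib]
      congr 1
      simp only [ite_mul, zero_mul]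
      rw [Finset.sum_ite_eq, if_pos hi']
    rw [hDiag] at h
    have hsplit : (∑ j ∈ lᶜ, W i j * ℓ j) + ∑ j ∈ l, W i j * ℓ j
        = ∑ j, W i j * ℓ j := Finset.sum_compl_add_sum l _
    linarith
  -- global maximum of |ℓ|
  have hU : (Finset.univ : Finset (Fin n)).Nonempty :=
    ⟨hne.choose, Finset.mem_univ _⟩
  obtain ⟨i₀, -, hi₀⟩ := Finset.exists_mem_eq_sup' hU (fun j => |ℓ j|)
  have hAge : ∀ i : Fin n, |ℓ i| ≤ |ℓ i₀| := fun i =>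
    hi₀ ▸ Finset.le_sup' (fun j => |ℓ j|) (Finset.mem_univ i)
  have hMge : ∀ i ∈ l, |ℓ i| ≤ l.sup' hne fun j => |ℓ j| := fun i hi =>
    Finset.le_sup' (fun j => |ℓ j|) hi
  have hM0 : 0 ≤ l.sup' hne fun j => |ℓ j| :=
    le_trans (abs_nonneg _) (hMge _ hne.choose_spec)
  have hAM : |ℓ i₀| ≤ l.sup' hne fun j => |ℓ j| := by
    by_cases hmem : i₀ ∈ l
    · exact hMge _ hmem
    · -- max attained at unlabeled vertex: must be 0
      have heq := key i₀ hmem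
      have hd : 0 ≤ ∑ j, W i₀ j := Finset.sum_nonneg fun j _ => hnn i₀ j
      have h1 : ((∑ j, W i₀ j) + γ) * |ℓ i₀| = |∑ j, W i₀ j * ℓ j| := by
        rw [← heq, abs_mul,
          abs_of_nonneg (by linarith : (0:ℝ) ≤ (∑ j, W i₀ j) + γ)]
      have h2 : |∑ j, W i₀ j * ℓ j| ≤ (∑ j, W i₀ j) * |ℓ i₀| := by
        calc |∑ j, W i₀ j * ℓ j| ≤ ∑ j, |W i₀ j * ℓ j| :=
              Finset.abs_sum_le_sum_abs _ _
          _ ≤ ∑ j, W i₀ j * |ℓ i₀| := by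
              refine Finset.sum_le_sum fun j _ => ?_
              rw [abs_mul, abs_of_nonneg (hnn i₀ j)]
              exact mul_le_mul_of_nonneg_left (hAge j) (hnn i₀ j)
          _ = (∑ j, W i₀ j) * |ℓ i₀| := (Finset.sum_mul _ _ _).symm
      have hA0 : 0 ≤ |ℓ i₀| := abs_nonneg _
      have h3 : γ * |ℓ i₀| ≤ γ * 0 := by nlinarith
      have h4 : |ℓ i₀| ≤ 0 := le_of_mul_le_mul_left h3 hγ
      linarith
  refine ⟨fun i _ => le_trans (hAge i) hAM, fun hpm i => ?_⟩
  have hM1 : (l.sup' hne fun j => |ℓ j|) ≤ 1 := by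
    apply Finset.sup'_le
    intro j hj
    rcases hpm j hj with h | h <;> rw [h] <;> simp
  exact le_trans (le_trans (hAge i) hAM) hM1
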